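/- arXiv:1803.08404 — 2 statements merged into one kernel-verified Lean document; each statement's English description precedes it below -/
import Mathlib

section
/- Let A and B be sequences of length n of complex numbers, each containing at least one nonzero entry. Then −sqrt(ADF(A)·ADF(B)) ≤ CDF(A,B) − 1 ≤ sqrt(ADF(A)·ADF(B)); equivalently, the Pursley–Sarwate criterion satisfies PSC(A,B) = sqrt(ADF(A)·ADF(B)) + CDF(A,B) ≥ 1. -/
open Complex Real Filter Topology

noncomputable section

/-- Zero-extension of a (length `n`) sequence to all of `ℤ`: entries outside
`{0, ..., n-1}` are set to `0`. -/
def seqExt (n : ℕ) (A : ℤ → ℂ) : ℤ → ℂ := fun j => if 0 ≤ j ∧ j < (n : ℤ) then A j else 0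

/-- Aperiodic crosscorrelation of two sequences of length `n` at shift `u`:
`C_{A,B}(u) = ∑_{j ∈ ℤ} a_j * conj (b_{j+u})`.  Since the zero-extended entries
vanish outside `{0, ..., n-1}`, the sum over `ℤ` equals the sum over that range. -/
def corr (n : ℕ) (A B : ℤ → ℂ) (u : ℤ) : ℂ :=
  ∑ j ∈ Finset.Icc (0 : ℤ) ((n : ℤ) - 1), seqExt n A j * (starRingEnd ℂ) (seqExt n B (j + u))

lemma seqExt_eq_zero {n : ℕ} {A : ℤ → ℂ} {j : ℤ}
    (h : j ∉ Finset.Icc (0:ℤ) ((n:ℤ)-1)) : seqExt n A j = 0 := by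
  simp only [Finset.mem_Icc, not_and_or, not_le, not_lt] at h
  simp only [seqExt, ite_eq_right_iff]
  intro hj
  omega

lemma shift_sum (n : ℕ) {j : ℤ} (hj : j ∈ Finset.Icc (0:ℤ) ((n:ℤ)-1)) (g : ℤ → ℂ)
    (hg : ∀ m, m ∉ Finset.Icc (0:ℤ) ((n:ℤ)-1) → g m = 0) :
    ∑ u ∈ Finset.Icc (-(n:ℤ)+1) ((n:ℤ)-1), g (j + u)
      = ∑ m ∈ Finset.Icc (0:ℤ) ((n:ℤ)-1), g m := by
  have h1 : ∑ u ∈ Finset.Icc (-(n:ℤ)+1) ((n:ℤ)-1), g (j + u)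
      = ∑ m ∈ Finset.Icc (j + (-(n:ℤ)+1)) (j + ((n:ℤ)-1)), g m := by
    rw [← Finset.map_add_left_Icc, Finset.sum_map]
    rfl
  rw [h1]
  refine (Finset.sum_subset ?_ ?_).symm
  · intro x hx
    simp only [Finset.mem_Icc] at *
    omega
  · intro x _ hx'
    exact hg x hx'

lemma key_identity (n : ℕ) (A B : ℤ → ℂ) :
    ∑ u ∈ Finset.Icc (-(n:ℤ)+1) ((n:ℤ)-1), corr n A B u * (starRingEnd ℂ) (corr n A B u)
      = ∑ v ∈ Finset.Icc (-(n:ℤ)+1) ((n:ℤ)-1), corr n A A v * (starRingEnd ℂ) (corr n B B v) := by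
  set a := seqExt n A with ha
  set b := seqExt n B with hb
  set J := Finset.Icc (0:ℤ) ((n:ℤ)-1) with hJ
  set U := Finset.Icc (-(n:ℤ)+1) ((n:ℤ)-1) with hU
  have expandL : ∀ u, corr n A B u * (starRingEnd ℂ) (corr n A B u)
      = ∑ j ∈ J, ∑ k ∈ J, (a j * (starRingEnd ℂ) (a k)) *
          ((starRingEnd ℂ) (b (j+u)) * b (k+u)) := by
    intro u
    simp only [corr, map_sum, map_mul, Complex.conj_conj]
    rw [Finset.sum_mul_sum]
    refine Finset.sum_congr rfl fun j _ => Finset.sum_congr rfl fun k _ => ?_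
    ring
  have expandR : ∀ v, corr n A A v * (starRingEnd ℂ) (corr n B B v)
      = ∑ j ∈ J, ∑ m ∈ J, (a j * (starRingEnd ℂ) (a (j+v))) *
          ((starRingEnd ℂ) (b m) * b (m+v)) := by
    intro v
    simp only [corr, map_sum, map_mul, Complex.conj_conj]
    rw [Finset.sum_mul_sum]
  calc ∑ u ∈ U, corr n A B u * (starRingEnd ℂ) (corr n A B u)
      = ∑ j ∈ J, ∑ k ∈ J, ∑ u ∈ U, (a j * (starRingEnd ℂ) (a k)) *
          ((starRingEnd ℂ) (b (j+u)) * b (k+u)) := by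
        simp only [expandL]
        rw [Finset.sum_comm]
        apply Finset.sum_congr rfl; intro j _
        rw [Finset.sum_comm]
    _ = ∑ j ∈ J, ∑ k ∈ J, ∑ m ∈ J, (a j * (starRingEnd ℂ) (a k)) *
          ((starRingEnd ℂ) (b m) * b (m + (k - j))) := by
        apply Finset.sum_congr rfl; intro j hj
        apply Finset.sum_congr rfl; intro k hk
        have : ∀ u : ℤ, (a j * (starRingEnd ℂ) (a k)) *
            ((starRingEnd ℂ) (b (j+u)) * b (k+u))
            = (fun m => (a j * (starRingEnd ℂ) (a k)) *
              ((starRingEnd ℂ) (b m) * b (m + (k - j)))) (j + u) := by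
          intro u
          simp only
          congr 3
          ring
        simp only [this]
        exact shift_sum n hj
          (fun m => (a j * (starRingEnd ℂ) (a k)) * ((starRingEnd ℂ) (b m) * b (m + (k - j))))
          (fun m hm => by simp only [hb, seqExt_eq_zero hm, map_zero, zero_mul, mul_zero])
    _ = ∑ j ∈ J, ∑ m ∈ J, ∑ k ∈ J, (a j * (starRingEnd ℂ) (a k)) *
          ((starRingEnd ℂ) (b m) * b (m + (k - j))) := by
        apply Finset.sum_congr rfl; intro j _
        rw [Finset.sum_comm]
    _ = ∑ j ∈ J, ∑ m ∈ J, ∑ v ∈ U, (a j * (starRingEnd ℂ) (a (j+v))) *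
          ((starRingEnd ℂ) (b m) * b (m+v)) := by
        apply Finset.sum_congr rfl; intro j hj
        apply Finset.sum_congr rfl; intro m _
        have : ∀ v : ℤ, (a j * (starRingEnd ℂ) (a (j+v))) *
            ((starRingEnd ℂ) (b m) * b (m+v))
            = (fun k => (a j * (starRingEnd ℂ) (a k)) *
              ((starRingEnd ℂ) (b m) * b (m + (k - j)))) (j + v) := by
          intro v
          simp only
          congr 3
          ring
        simp only [this]
        exact (shift_sum n hj
          (fun k => (a j * (starRingEnd ℂ) (a k)) * ((starRingEnd ℂ) (b m) * b (m + (k - j))))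
          (fun k hk => by
            simp only [ha, seqExt_eq_zero hk, map_zero, mul_zero, zero_mul])).symm
    _ = ∑ v ∈ U, corr n A A v * (starRingEnd ℂ) (corr n B B v) := by
        simp only [expandR]
        conv_rhs => rw [Finset.sum_comm]
        apply Finset.sum_congr rfl; intro j _
        rw [Finset.sum_comm]

/-- Crosscorrelation demerit factor `CDF(A,B)`.  The correlations vanish for
`|u| ≥ n`, so the sum over all `u ∈ ℤ` equals the sum over `-(n-1) ≤ u ≤ n-1`. -/
def cdf (n : ℕ) (A B : ℤ → ℂ) : ℝ :=
  (∑ u ∈ Finset.Icc (-(n : ℤ) + 1) ((n : ℤ) - 1), ‖corr n A B u‖ ^ 2) /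
    (‖corr n A A 0‖ * ‖corr n B B 0‖)

/-- Autocorrelation demerit factor `ADF(A)`. -/
def adf (n : ℕ) (A : ℤ → ℂ) : ℝ :=
  (∑ u ∈ Finset.Icc (-(n : ℤ) + 1) ((n : ℤ) - 1) \ {0}, ‖corr n A A u‖ ^ 2) /
    ‖corr n A A 0‖ ^ 2

/-- Pursley-Sarwate criterion `PSC(A,B)`. -/
def psc (n : ℕ) (A B : ℤ → ℂ) : ℝ := Real.sqrt (adf n A * adf n B) + cdf n A B

/-- The Chu sequence of length `n` with parameter `a`: `z_j = exp(π i a j² / n)`. -/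
def chu (n : ℕ) (a : ℤ) : ℤ → ℂ :=
  fun j => Complex.exp (Real.pi * Complex.I * (a : ℂ) * (j : ℂ) ^ 2 / (n : ℂ))

/-- Generalised Gauss sum `S_N(x, θ) = ∑_{j=1}^N exp(π i x j² + 2 π i θ j)`. -/
def gSum (N : ℕ) (x θ : ℝ) : ℂ :=
  ∑ j ∈ Finset.Icc 1 N,
    Complex.exp (Real.pi * Complex.I * (x : ℂ) * (j : ℂ) ^ 2 +
      2 * Real.pi * Complex.I * (θ : ℂ) * (j : ℂ))

lemma corr_zero_eq (n : ℕ) (C : ℤ → ℂ) :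
    corr n C C 0 = ((∑ j ∈ Finset.Icc (0:ℤ) ((n:ℤ)-1), Complex.normSq (seqExt n C j) : ℝ) : ℂ) := by
  rw [corr, Complex.ofReal_sum]
  exact Finset.sum_congr rfl fun j _ => by rw [add_zero, Complex.mul_conj]

lemma re_of_sum (s : Finset ℤ) (f : ℤ → ℂ) :
    ∑ u ∈ s, ‖f u‖ ^ 2 = (∑ u ∈ s, f u * (starRingEnd ℂ) (f u)).re := by
  rw [Complex.re_sum]
  exact Finset.sum_congr rfl fun u _ => by
    rw [Complex.mul_conj, Complex.sq_norm, Complex.ofReal_re]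

/-- the Pursley-Sarwate inequalities:
-sqrt(ADF(A) ADF(B)) <= CDF(A,B) - 1 <= sqrt(ADF(A) ADF(B)), equivalently PSC(A,B) >= 1. -/
theorem pursley_sarwate (n : ℕ) (A B : ℤ → ℂ)
    (hA : ∃ j : ℤ, seqExt n A j ≠ 0) (hB : ∃ j : ℤ, seqExt n B j ≠ 0) :
    -Real.sqrt (adf n A * adf n B) ≤ cdf n A B - 1 ∧
    cdf n A B - 1 ≤ Real.sqrt (adf n A * adf n B) ∧
    1 ≤ psc n A B := by
  obtain ⟨j₀, hj₀⟩ := hA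
  obtain ⟨k₀, hk₀⟩ := hB
  set J := Finset.Icc (0:ℤ) ((n:ℤ)-1) with hJ
  set U := Finset.Icc (-(n:ℤ)+1) ((n:ℤ)-1) with hU
  have hj₀J : j₀ ∈ J := by by_contra h; exact hj₀ (seqExt_eq_zero h)
  have hk₀J : k₀ ∈ J := by by_contra h; exact hk₀ (seqExt_eq_zero h)
  set rA := ∑ j ∈ J, Complex.normSq (seqExt n A j) with hrAdef
  set rB := ∑ j ∈ J, Complex.normSq (seqExt n B j) with hrBdef
  have hrA : 0 < rA :=
    Finset.sum_pos' (fun i _ => Complex.normSq_nonneg _)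
      ⟨j₀, hj₀J, Complex.normSq_pos.mpr hj₀⟩
  have hrB : 0 < rB :=
    Finset.sum_pos' (fun i _ => Complex.normSq_nonneg _)
      ⟨k₀, hk₀J, Complex.normSq_pos.mpr hk₀⟩
  have absA : ‖corr n A A 0‖ = rA := by
    rw [corr_zero_eq, Complex.norm_real, Real.norm_of_nonneg hrA.le]
  have absB : ‖corr n B B 0‖ = rB := by
    rw [corr_zero_eq, Complex.norm_real, Real.norm_of_nonneg hrB.le]
  have h0U : (0:ℤ) ∈ U := by
    have : (0:ℤ) ≤ (n:ℤ) - 1 := by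
      have := Finset.mem_Icc.mp hj₀J; omega
    simp only [hU, Finset.mem_Icc]; omega
  set T := ∑ v ∈ U \ {0}, corr n A A v * (starRingEnd ℂ) (corr n B B v) with hTdef
  have hsplit : ∑ v ∈ U, corr n A A v * (starRingEnd ℂ) (corr n B B v)
      = corr n A A 0 * (starRingEnd ℂ) (corr n B B 0) + T :=
    Finset.sum_eq_add_sum_sdiff_singleton_of_mem h0U _
  have hre0 : (corr n A A 0 * (starRingEnd ℂ) (corr n B B 0)).re = rA * rB := by
    rw [corr_zero_eq, corr_zero_eq, Complex.conj_ofReal, ← Complex.ofReal_mul,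
      Complex.ofReal_re]
  have hnum : ∑ u ∈ U, ‖corr n A B u‖ ^ 2 = rA * rB + T.re := by
    rw [re_of_sum, key_identity, hsplit, Complex.add_re, hre0]
  set SA := ∑ v ∈ U \ {0}, ‖corr n A A v‖ ^ 2 with hSAdef
  set SB := ∑ v ∈ U \ {0}, ‖corr n B B v‖ ^ 2 with hSBdef
  have hSA : 0 ≤ SA := Finset.sum_nonneg fun _ _ => sq_nonneg _
  have hSB : 0 ≤ SB := Finset.sum_nonneg fun _ _ => sq_nonneg _
  have hT : |T.re| ≤ Real.sqrt SA * Real.sqrt SB := by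
    have h1 : |T.re| ≤ ‖T‖ := Complex.abs_re_le_norm T
    have h2 : ‖T‖ ≤ ∑ v ∈ U \ {0},
        ‖corr n A A v‖ * ‖corr n B B v‖ := by
      refine (norm_sum_le _ _).trans_eq ?_
      exact Finset.sum_congr rfl fun v _ => by rw [norm_mul, Complex.norm_conj]
    have h3 : (∑ v ∈ U \ {0}, ‖corr n A A v‖ * ‖corr n B B v‖) ^ 2
        ≤ SA * SB :=
      Finset.sum_mul_sq_le_sq_mul_sq _ _ _
    have h4 : ∑ v ∈ U \ {0}, ‖corr n A A v‖ * ‖corr n B B v‖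
        ≤ Real.sqrt SA * Real.sqrt SB := by
      have hnn : 0 ≤ ∑ v ∈ U \ {0}, ‖corr n A A v‖ * ‖corr n B B v‖ :=
        Finset.sum_nonneg fun _ _ => mul_nonneg (norm_nonneg _) (norm_nonneg _)
      calc ∑ v ∈ U \ {0}, ‖corr n A A v‖ * ‖corr n B B v‖
          = Real.sqrt ((∑ v ∈ U \ {0},
              ‖corr n A A v‖ * ‖corr n B B v‖) ^ 2) :=
            (Real.sqrt_sq hnn).symm
        _ ≤ Real.sqrt (SA * SB) := Real.sqrt_le_sqrt h3
        _ = Real.sqrt SA * Real.sqrt SB := Real.sqrt_mul hSA _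
    linarith
  have hsq : Real.sqrt (adf n A * adf n B) = Real.sqrt SA * Real.sqrt SB / (rA * rB) := by
    rw [adf, adf, absA, absB, ← hU, ← hSAdef, ← hSBdef, div_mul_div_comm]
    rw [show rA ^ 2 * rB ^ 2 = (rA * rB) ^ 2 by ring]
    rw [Real.sqrt_div (mul_nonneg hSA hSB), Real.sqrt_sq (le_of_lt (mul_pos hrA hrB)),
      Real.sqrt_mul hSA]
  have hcdf : cdf n A B - 1 = T.re / (rA * rB) := by
    rw [cdf, absA, absB, ← hU, hnum]
    field_simp
    ring
  have hmain : |cdf n A B - 1| ≤ Real.sqrt (adf n A * adf n B) := by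
    rw [hcdf, hsq, abs_div, abs_of_pos (mul_pos hrA hrB)]
    gcongr
  have h1 := abs_le.mp hmain
  refine ⟨h1.1, h1.2, ?_⟩
  have : psc n A B = Real.sqrt (adf n A * adf n B) + cdf n A B := rfl
  linarith [h1.1]
end
end

section
/- Let a be an integer, n ≥ 1 an integer, d = gcd(a, n), and m = n/d. Let Z = Z_n^{(a)} be the Chu sequence of length n with parameter a. Then for every integer u with 0 ≤ u < n one has |C_{Z,Z}(u)| = |C_{Z,Z}(−u)| = |Σ_{j=0}^{n−u−1} exp(2πi·(a/d)·u·j/m)|; in particular, if m does not divide u, then |C_{Z,Z}(u)| = |sin(π a u²/n) / sin(π a u/n)|. -/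
open Complex Real Filter Topology

noncomputable section

-- ===== auxiliary lemmas =====

lemma corr_superset (n : ℕ) (A B : ℤ → ℂ) (v : ℤ) (S : Finset ℤ)
    (h : Finset.Icc (0 : ℤ) ((n : ℤ) - 1) ⊆ S) :
    corr n A B v = ∑ j ∈ S, seqExt n A j * (starRingEnd ℂ) (seqExt n B (j + v)) := by
  refine Finset.sum_subset h (fun j _ hj => ?_)
  have : seqExt n A j = 0 := by
    simp only [Finset.mem_Icc, not_and_or, not_le] at hj
    simp only [seqExt, ite_eq_right_iff]
    intro hc; omega
  simp [this]

lemma corr_neg (n : ℕ) (A : ℤ → ℂ) (u : ℤ) (hu0 : 0 ≤ u) :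
    corr n A A (-u) = (starRingEnd ℂ) (corr n A A u) := by
  have h1 : corr n A A (-u)
      = ∑ j ∈ Finset.map (addRightEmbedding u) (Finset.Icc (-u : ℤ) ((n : ℤ) - 1)),
          seqExt n A j * (starRingEnd ℂ) (seqExt n A (j + -u)) := by
    apply corr_superset
    rw [Finset.map_add_right_Icc]
    apply Finset.Icc_subset_Icc (by omega) (by omega)
  rw [h1, Finset.sum_map]
  simp only [addRightEmbedding_apply]
  have h2 : corr n A A u
      = ∑ j ∈ Finset.Icc (-u : ℤ) ((n : ℤ) - 1),
          seqExt n A j * (starRingEnd ℂ) (seqExt n A (j + u)) := by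
    apply corr_superset
    apply Finset.Icc_subset_Icc (by omega) le_rfl
  rw [h2, map_sum]
  refine Finset.sum_congr rfl (fun j _ => ?_)
  have : j + u + -u = j := by ring
  rw [this]
  simp only [map_mul, RingHom.id_apply, Complex.conj_conj]
  ring

lemma Icc_int_eq (n : ℕ) :
    Finset.Icc (0:ℤ) ((n:ℤ)-1) = Finset.image (fun k : ℕ => (k:ℤ)) (Finset.range n) := by
  ext x
  simp only [Finset.mem_Icc, Finset.mem_image, Finset.mem_range]
  constructor
  · rintro ⟨h0, h1⟩; exact ⟨x.toNat, by omega, by omega⟩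
  · rintro ⟨k, hk, rfl⟩; omega

lemma corr_chu (a : ℤ) (n u : ℕ) (hn : 1 ≤ n) (hu : u ≤ n) :
    corr n (chu n a) (chu n a) (u:ℤ) =
      Complex.exp (-(Real.pi * Complex.I * a * u^2 / n)) *
        ∑ j ∈ Finset.range (n - u), Complex.exp ((j:ℂ) * -(2*Real.pi*Complex.I*a*u/n)) := by
  have hninj : Set.InjOn (fun k : ℕ => (k:ℤ)) (Finset.range n) := fun x _ y _ h => by
    simpa using h
  rw [corr, Icc_int_eq, Finset.sum_image hninj, Finset.mul_sum]
  rw [← Finset.sum_subset (Finset.range_subset_range.2 (Nat.sub_le n u))]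
  · refine Finset.sum_congr rfl (fun j hj => ?_)
    have hj' : j < n - u := Finset.mem_range.1 hj
    have h1 : seqExt n (chu n a) (j:ℤ) = chu n a j := by
      rw [seqExt, if_pos]
      exact ⟨by positivity, by exact_mod_cast (by omega : j < n)⟩
    have h2 : seqExt n (chu n a) ((j:ℤ) + u) = chu n a ((j:ℤ)+u) := by
      rw [seqExt, if_pos]
      exact ⟨by positivity, by exact_mod_cast (by omega : j + u < n)⟩
    rw [h1, h2, chu, chu]
    rw [← Complex.exp_conj]
    have hc : (starRingEnd ℂ) (Real.pi * Complex.I * (a : ℂ) * (((j:ℤ)+u : ℤ) : ℂ) ^ 2 / (n : ℂ))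
        = -(Real.pi * Complex.I * (a : ℂ) * (((j:ℤ)+u : ℤ) : ℂ) ^ 2 / (n : ℂ)) := by
      simp [map_div₀, map_mul, Complex.conj_I, Complex.conj_ofReal, map_pow]
      ring
    rw [hc, ← Complex.exp_add, ← Complex.exp_add]
    congr 1
    have hne : (n:ℂ) ≠ 0 := Nat.cast_ne_zero.2 (by omega)
    push_cast
    field_simp
    ring
  · intro j hjn hjs
    have : seqExt n (chu n a) ((j:ℤ) + u) = 0 := by
      simp only [seqExt, ite_eq_right_iff]
      intro hc
      exfalso
      simp only [Finset.mem_range] at hjn hjs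
      omega
    simp [this]

lemma abs_exp_two_mul_I_sub_one (θ : ℝ) :
    ‖Complex.exp (2*(θ:ℂ)*Complex.I) - 1‖ = 2*|Real.sin θ| := by
  have hs : Complex.exp ((θ:ℂ)*Complex.I) - Complex.exp (-(θ:ℂ)*Complex.I)
      = 2*Complex.I*Complex.sin (θ:ℂ) := by
    rw [Complex.sin]
    ring_nf
    rw [Complex.I_sq]
    ring
  have h : Complex.exp (2*(θ:ℂ)*Complex.I) - 1
      = Complex.exp ((θ:ℂ)*Complex.I) * (2*Complex.I*Complex.sin (θ:ℂ)) := by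
    rw [← hs, mul_sub, ← Complex.exp_add, ← Complex.exp_add]
    rw [show (θ:ℂ)*Complex.I + (θ:ℂ)*Complex.I = 2*(θ:ℂ)*Complex.I by ring]
    norm_num
  rw [h, norm_mul, Complex.norm_exp_ofReal_mul_I, one_mul, ← Complex.ofReal_sin,
    norm_mul, norm_mul, Complex.norm_two, Complex.norm_I, Complex.norm_real, Real.norm_eq_abs]
  ring

lemma exp_arg_eq (a : ℤ) (d : ℕ) (m n u j : ℕ) (hn0 : (n:ℂ) ≠ 0) (hm0' : (m:ℂ) ≠ 0)
    (keyC : (a:ℂ) * (m:ℂ) = ((a / (d:ℤ) : ℤ):ℂ) * (n:ℂ)) :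
    (j:ℂ) * -(2*Real.pi*Complex.I*a*u/n)
      = -(2 * Real.pi * Complex.I * ((a / (d : ℤ) : ℤ) : ℂ) * (u : ℂ) * (j : ℂ) / (m : ℂ)) := by
  field_simp
  linear_combination (-(u:ℂ) * (j:ℂ)) * keyC

lemma exp_term_conj (a : ℤ) (d : ℕ) (m n u j : ℕ) (hn0 : (n:ℂ) ≠ 0) (hm0' : (m:ℂ) ≠ 0)
    (keyC : (a:ℂ) * (m:ℂ) = ((a / (d:ℤ) : ℤ):ℂ) * (n:ℂ)) :
    Complex.exp ((j:ℂ) * -(2*Real.pi*Complex.I*a*u/n))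
      = (starRingEnd ℂ) (Complex.exp (2 * Real.pi * Complex.I * ((a / (d : ℤ) : ℤ) : ℂ) * (u : ℂ) * (j : ℂ) / (m : ℂ))) := by
  rw [← Complex.exp_conj]
  congr 1
  have hc : (starRingEnd ℂ) (2 * Real.pi * Complex.I * ((a / (d : ℤ) : ℤ) : ℂ) * (u : ℂ) * (j : ℂ) / (m : ℂ))
      = -(2 * Real.pi * Complex.I * ((a / (d : ℤ) : ℤ) : ℂ) * (u : ℂ) * (j : ℂ) / (m : ℂ)) := by
    simp [map_div₀, map_mul, Complex.conj_I, Complex.conj_ofReal, map_ofNat]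
    ring
  rw [hc]
  exact exp_arg_eq a d m n u j hn0 hm0' keyC

lemma sin_ne_zero_of_not_dvd (a : ℤ) (n : ℕ) (hn : 1 ≤ n) (d m : ℕ)
    (hd : d = Int.gcd a n) (hm : m = n / d) (u : ℕ) (h : ¬ ((m : ℤ) ∣ (u : ℤ))) :
    Real.sin (Real.pi * a * u / n) ≠ 0 := by
  have hd0 : 0 < Int.gcd a n := by
    rcases Nat.eq_zero_or_pos (Int.gcd a n) with h0 | h0
    · exfalso; have := Int.gcd_eq_zero_iff.1 h0; omega
    · exact h0
  have hdvd : (d:ℤ) ∣ a := hd ▸ Int.gcd_dvd_left a (n:ℤ)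
  have hdn : d ∣ n := by
    have : (d:ℤ) ∣ (n:ℤ) := hd ▸ Int.gcd_dvd_right a (n:ℤ)
    exact_mod_cast this
  have hnm : n = d * m := by rw [hm, Nat.mul_div_cancel' hdn]
  intro hs
  obtain ⟨k, hk⟩ := Real.sin_eq_zero_iff.1 hs
  have hn0 : (n:ℝ) ≠ 0 := Nat.cast_ne_zero.2 (by omega)
  have h2 : (k:ℝ) * (n:ℝ) = (a:ℝ) * (u:ℝ) := by
    have hπ := Real.pi_ne_zero
    field_simp at hk
    apply mul_left_cancel₀ hπ
    linear_combination π * hk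
  have hz : k * (n:ℤ) = a * u := by exact_mod_cast h2
  -- write a = d * a', n = d * m
  have ha : (d:ℤ) * (a / (d:ℤ)) = a := Int.mul_ediv_cancel' hdvd
  have hnmZ : (n:ℤ) = (d:ℤ) * (m:ℤ) := by exact_mod_cast congrArg (Nat.cast : ℕ → ℤ) hnm
  have hd0' : (d:ℤ) ≠ 0 := by
    have : d ≠ 0 := by omega
    exact_mod_cast this
  have hkm : k * (m:ℤ) = (a / (d:ℤ)) * u := by
    apply mul_left_cancel₀ hd0'
    calc (d:ℤ) * (k * m) = k * ((d:ℤ)*m) := by ring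
    _ = k * n := by rw [← hnmZ]
    _ = a * u := hz
    _ = ((d:ℤ) * (a / (d:ℤ))) * u := by rw [ha]
    _ = (d:ℤ) * ((a / (d:ℤ)) * u) := by ring
  have hmdvd : (m:ℤ) ∣ (u:ℤ) * (a / (d:ℤ)) := ⟨k, by linarith [hkm]⟩
  have hcop : Int.gcd ((m:ℤ)) (a / (d:ℤ)) = 1 := by
    have := Int.gcd_div_gcd_div_gcd (i := a) (j := (n:ℤ)) (by exact_mod_cast hd0)
    rw [Int.gcd_comm]
    have hmq : (a / (Int.gcd a (n:ℤ) : ℤ)) = a / (d:ℤ) := by rw [hd]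
    have hnq : ((n:ℤ) / (Int.gcd a (n:ℤ) : ℤ)) = (m:ℤ) := by
      rw [← hd, hm]
      exact_mod_cast (Int.natCast_div n d).symm
    rwa [hmq, hnq] at this
  have : (m:ℤ) ∣ (u:ℤ) := Int.dvd_of_dvd_mul_left_of_gcd_one hmdvd hcop
  exact h this

/-- the magnitudes of the aperiodic autocorrelations of a Chu sequence. -/
theorem chu_autocorrelation (a : ℤ) (n : ℕ) (hn : 1 ≤ n) (d m : ℕ)
    (hd : d = Int.gcd a n) (hm : m = n / d) (u : ℕ) (hu : u < n) :
    ‖corr n (chu n a) (chu n a) u‖ =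
      ‖corr n (chu n a) (chu n a) (-(u : ℤ))‖ ∧
    ‖corr n (chu n a) (chu n a) u‖ =
      ‖∑ j ∈ Finset.range (n - u),
        Complex.exp (2 * Real.pi * Complex.I * ((a / (d : ℤ) : ℤ) : ℂ) * (u : ℂ) * (j : ℂ) / (m : ℂ))‖ ∧
    (¬ ((m : ℤ) ∣ (u : ℤ)) →
      ‖corr n (chu n a) (chu n a) u‖ =
        |Real.sin (Real.pi * a * u ^ 2 / n) / Real.sin (Real.pi * a * u / n)|) := by
  have hn0 : (n:ℂ) ≠ 0 := Nat.cast_ne_zero.2 (by omega)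
  have hd0 : 0 < d := by
    rw [hd]
    rcases Nat.eq_zero_or_pos (Int.gcd a n) with h | h
    · exfalso; have := Int.gcd_eq_zero_iff.1 h; omega
    · exact h
  have hdvd : (d:ℤ) ∣ a := hd ▸ Int.gcd_dvd_left a (n:ℤ)
  have hdn : d ∣ n := by
    have : (d:ℤ) ∣ (n:ℤ) := hd ▸ Int.gcd_dvd_right a (n:ℤ)
    exact_mod_cast this
  have hnm : n = d * m := by rw [hm, Nat.mul_div_cancel' hdn]
  have hm0 : 0 < m := Nat.pos_of_ne_zero (fun h => by rw [h, Nat.mul_zero] at hnm; omega)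
  have hm0' : (m:ℂ) ≠ 0 := Nat.cast_ne_zero.2 (by omega)
  have ha : (d:ℤ) * (a / (d:ℤ)) = a := Int.mul_ediv_cancel' hdvd
  have keyZ : a * (m:ℤ) = (a / (d:ℤ)) * (n:ℤ) := by
    have hnmZ : (n:ℤ) = (d:ℤ) * (m:ℤ) := by exact_mod_cast congrArg (Nat.cast : ℕ → ℤ) hnm
    calc a * (m:ℤ) = ((d:ℤ) * (a / (d:ℤ))) * m := by rw [ha]
    _ = (a / (d:ℤ)) * ((d:ℤ) * m) := by ring
    _ = (a / (d:ℤ)) * (n:ℤ) := by rw [← hnmZ]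
  have keyC : (a:ℂ) * (m:ℂ) = ((a / (d:ℤ) : ℤ):ℂ) * (n:ℂ) := by
    exact_mod_cast congrArg (Int.cast : ℤ → ℂ) keyZ
  have hphase : ‖Complex.exp (-(Real.pi * Complex.I * a * u^2 / n))‖ = 1 := by
    rw [show -((Real.pi:ℂ)*Complex.I*a*(u:ℂ)^2/n) = ((-(Real.pi*a*u^2/n) : ℝ):ℂ) * Complex.I by
      push_cast; ring, Complex.norm_exp_ofReal_mul_I]
  have hcorr := corr_chu a n u hn hu.le
  refine ⟨?_, ?_, ?_⟩
  · rw [corr_neg n (chu n a) (u:ℤ) (Int.ofNat_nonneg u)]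
    exact (Complex.norm_conj _).symm
  · rw [hcorr, norm_mul, hphase, one_mul]
    rw [Finset.sum_congr rfl (fun j _ => exp_term_conj a d m n u j hn0 hm0' keyC)]
    rw [← map_sum]
    exact Complex.norm_conj _
  · intro hdvdu
    have hsin := sin_ne_zero_of_not_dvd a n hn d m hd hm u hdvdu
    set r : ℂ := Complex.exp (-(2*Real.pi*Complex.I*a*u/n)) with hr
    have hrform : r = Complex.exp (2*((-(Real.pi*a*u/n):ℝ):ℂ)*Complex.I) := by
      rw [hr]; congr 1; push_cast; ring
    have habs1 : ‖r - 1‖ = 2*|Real.sin (Real.pi*a*u/n)| := by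
      rw [hrform, abs_exp_two_mul_I_sub_one, Real.sin_neg, abs_neg]
    have hr1 : r ≠ 1 := by
      intro h1
      rw [h1, sub_self, norm_zero] at habs1
      have : |Real.sin (Real.pi*a*u/n)| = 0 := by linarith
      exact hsin (abs_eq_zero.1 this)
    have hrN : r ^ (n - u) = Complex.exp (2*((Real.pi*a*u^2/n : ℝ):ℂ)*Complex.I) := by
      rw [hr, ← Complex.exp_nat_mul]
      rw [show ((n-u:ℕ):ℂ) * (-(2*Real.pi*Complex.I*a*u/n))
          = 2*((Real.pi*a*u^2/n : ℝ):ℂ)*Complex.I + (-(a*u) : ℤ)*(2*Real.pi*Complex.I) by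
        push_cast [Nat.cast_sub hu.le]
        field_simp
        ring]
      rw [Complex.exp_add, Complex.exp_int_mul_two_pi_mul_I, mul_one]
    have habsN : ‖r ^ (n-u) - 1‖ = 2*|Real.sin (Real.pi*a*u^2/n)| := by
      rw [hrN, abs_exp_two_mul_I_sub_one]
    rw [hcorr, norm_mul, hphase, one_mul]
    rw [Finset.sum_congr rfl (fun j _ => Complex.exp_nat_mul (-(2*Real.pi*Complex.I*a*u/n)) j)]
    rw [geom_sum_eq hr1, norm_div, habsN, habs1, abs_div]
    ring
end
end
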